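/- Let R be a finite set of leftward-directed rays all of which cross the vertical line x = 0 (equivalently, rightward-directed rays from x-coordinates < 0), and V a finite set of vertical segments all with x-coordinate strictly less than 0. Suppose the SSR covering ILP (choose minimum rays to hit all segments in V) satisfies OPT ≤ 2·OPT_LP, and similarly the SRS ILP satisfies OPT ≤ 2·OPT_LP. Then for any vertically-stabbed-L graph G given with its representation, the dominating set ILP Q satisfies: there is a feasible dominating set D with |D| ≤ 8·OPT(Q_l) ≤ 8·OPT(Q). -/
import Mathlib


attribute [local instance] Classical.propDecidable

/-- A rightward-directed horizontal ray with left endpoint `(x, y)`: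
the point set `{(x', y) : x ≤ x'}`. -/
structure RayR where
  x : ℝ
  y : ℝ

/-- A vertical segment with `x`-coordinate `x` and `y`-range `[lo, hi]`. -/
structure VSeg where
  x : ℝ
  lo : ℝ
  hi : ℝ

/-- A rightward-directed ray intersects a vertical segment. -/
def hitsR (r : RayR) (v : VSeg) : Prop :=
  r.x ≤ v.x ∧ v.lo ≤ r.y ∧ r.y ≤ v.hi

/-- An `L`-path stabbed by the vertical line `x = 0`: corner `(cx, cy)` with `cx < 0`,
vertical segment going up from the corner to height `top`, and horizontal segment
going right from the corner to `x`-coordinate `rx ≥ 0` (so it crosses `x = 0`). -/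
structure LPath where
  cx : ℝ
  cy : ℝ
  top : ℝ
  rx : ℝ
  corner_neg : cx < 0
  crosses : 0 ≤ rx
  vert_ok : cy ≤ top

/-- The point set of an `L`-path. -/
def LPath.pts (L : LPath) : Set (ℝ × ℝ) :=
  {p | (p.1 = L.cx ∧ L.cy ≤ p.2 ∧ p.2 ≤ L.top) ∨
       (p.2 = L.cy ∧ L.cx ≤ p.1 ∧ p.1 ≤ L.rx)}

/-- The horizontal segment of an `L`-path. -/
def LPath.hseg (L : LPath) : Set (ℝ × ℝ) :=
  {p | p.2 = L.cy ∧ L.cx ≤ p.1 ∧ p.1 ≤ L.rx}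

noncomputable section Aux
open Finset

def Rof (L : LPath) : RayR := ⟨L.cx, L.cy⟩
def Sof (L : LPath) : VSeg := ⟨L.cx, L.cy, L.top⟩

lemma selfInter (L : LPath) : (L.pts ∩ L.pts).Nonempty :=
  ⟨(L.cx, L.cy), Or.inl ⟨rfl, le_refl _, L.vert_ok⟩, Or.inl ⟨rfl, le_refl _, L.vert_ok⟩⟩

lemma hits_to_inter {L L' : LPath} (h : hitsR (Rof L) (Sof L')) :
    (L'.pts ∩ L.pts).Nonempty := by
  obtain ⟨h1, h2, h3⟩ := h
  exact ⟨(L'.cx, L.cy), Or.inl ⟨rfl, h2, h3⟩,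
    Or.inr ⟨rfl, h1, le_trans L'.corner_neg.le L.crosses⟩⟩

lemma inter_to_hits {L L' : LPath} (h : (L'.pts ∩ L.pts).Nonempty) :
    hitsR (Rof L) (Sof L') ∨ hitsR (Rof L') (Sof L) := by
  obtain ⟨p, hp', hp⟩ := h
  simp only [LPath.pts, Set.mem_setOf_eq] at hp' hp
  unfold hitsR Rof Sof
  dsimp only
  rcases hp' with ⟨e1, e2, e3⟩ | ⟨e1, e2, e3⟩ <;>
    rcases hp with ⟨f1, f2, f3⟩ | ⟨f1, f2, f3⟩
  · rcases le_total L'.cy L.cy with hc | hc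
    · exact Or.inl ⟨by rw [← e1, ← f1], hc, by linarith⟩
    · exact Or.inr ⟨by rw [← e1, ← f1], hc, by linarith⟩
  · exact Or.inl ⟨by linarith [e1 ▸ f2], by linarith, by linarith⟩
  · exact Or.inr ⟨by linarith [f1 ▸ e2], by linarith, by linarith⟩
  · rcases le_total L.cx L'.cx with hc | hc
    · exact Or.inl ⟨hc, by linarith, by linarith [L'.vert_ok]⟩
    · exact Or.inr ⟨hc, by linarith, by linarith [L.vert_ok]⟩

lemma fiber_sum {ι : Type*} [Fintype ι] {κ : Type*} (f : ι → κ) (x : ι → ℝ) (p : κ → Prop) :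
    ∑ s ∈ (univ.image f).filter p, ∑ v ∈ univ.filter (fun v => f v = s), x v
      = ∑ v ∈ univ.filter (fun v => p (f v)), x v := by
  classical
  rw [← Finset.sum_fiberwise_of_maps_to (s := univ.filter (fun v => p (f v)))
      (t := (univ.image f).filter p) (g := f)
      (fun v hv => by
        simp only [mem_filter, mem_univ, true_and] at hv ⊢
        exact ⟨mem_image_of_mem f (mem_univ v), hv⟩) x]
  refine sum_congr rfl fun s hs => ?_
  have hps : p s := (mem_filter.mp hs).2
  refine sum_congr ?_ fun _ _ => rfl
  ext v
  simp only [mem_filter, mem_univ, true_and]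
  exact ⟨fun h => ⟨by rw [h]; exact hps, h⟩, fun h => h.2⟩

/-- key ingredient: half-covering fractional solution rounds. -/
lemma round_half {ι : Type*} [Fintype ι] {κ : Type*} (f : ι → κ) (x : ι → ℝ)
    (hx0 : ∀ v, 0 ≤ x v) (p : κ → Prop)
    (h : (1/2 : ℝ) ≤ ∑ v ∈ univ.filter (fun v => p (f v)), x v) :
    1 ≤ ∑ s ∈ ((univ.image f).filter p), min 1 (2 * ∑ v ∈ univ.filter (fun v => f v = s), x v) := by
  classical
  set F := (univ.image f).filter p with hF
  have hg0 : ∀ s, (0:ℝ) ≤ ∑ v ∈ univ.filter (fun v => f v = s), x v :=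
    fun s => sum_nonneg fun v _ => hx0 v
  by_cases hbig : ∃ s ∈ F, (1:ℝ) ≤ 2 * ∑ v ∈ univ.filter (fun v => f v = s), x v
  · obtain ⟨s0, hs0, hs0b⟩ := hbig
    have h1 : min 1 (2 * ∑ v ∈ univ.filter (fun v => f v = s0), x v) = 1 := min_eq_left hs0b
    have h2 := Finset.single_le_sum
      (f := fun s => min 1 (2 * ∑ v ∈ univ.filter (fun v => f v = s), x v))
      (fun s _ => le_min zero_le_one (by linarith [hg0 s])) hs0
    have h2' : min 1 (2 * ∑ v ∈ univ.filter (fun v => f v = s0), x v)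
        ≤ ∑ s ∈ F, min 1 (2 * ∑ v ∈ univ.filter (fun v => f v = s), x v) := h2
    linarith
  · push_neg at hbig
    have heq : ∀ s ∈ F, min 1 (2 * ∑ v ∈ univ.filter (fun v => f v = s), x v)
        = 2 * ∑ v ∈ univ.filter (fun v => f v = s), x v :=
      fun s hs => min_eq_right (hbig s hs).le
    rw [sum_congr rfl heq, ← Finset.mul_sum, fiber_sum f x p]
    linarith

lemma round_lemma
    (hSSR : ∀ (R : Finset RayR) (V : Finset VSeg),
      sInf {c : ℝ | ∃ s : Finset RayR, s ⊆ R ∧ (∀ v ∈ V, ∃ r ∈ s, hitsR r v) ∧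
          c = s.card}
        ≤ 2 * sInf {c : ℝ | ∃ x : RayR → ℝ, (∀ r, 0 ≤ x r ∧ x r ≤ 1) ∧
          (∀ v ∈ V, 1 ≤ ∑ r ∈ R.filter (fun r => hitsR r v), x r) ∧
          c = ∑ r ∈ R, x r})
    (hSRS : ∀ (R : Finset RayR) (V : Finset VSeg),
      sInf {c : ℝ | ∃ s : Finset VSeg, s ⊆ V ∧ (∀ r ∈ R, ∃ v ∈ s, hitsR r v) ∧
          c = s.card}
        ≤ 2 * sInf {c : ℝ | ∃ x : VSeg → ℝ, (∀ v, 0 ≤ x v ∧ x v ≤ 1) ∧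
          (∀ r ∈ R, 1 ≤ ∑ v ∈ V.filter (fun v => hitsR r v), x v) ∧
          c = ∑ v ∈ V, x v})
    {ι : Type*} [Fintype ι] (P : ι → LPath) (x : ι → ℝ)
    (hx01 : ∀ v, 0 ≤ x v ∧ x v ≤ 1)
    (hxf : ∀ u : ι, 1 ≤ ∑ v ∈ univ.filter (fun v => ((P v).pts ∩ (P u).pts).Nonempty), x v) :
    ∃ D : Finset ι, (∀ u : ι, ∃ v ∈ D, ((P v).pts ∩ (P u).pts).Nonempty) ∧
      (D.card : ℝ) ≤ 8 * ∑ v, x v := by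
  classical
  rcases isEmpty_or_nonempty ι with hemp | hne
  · exact ⟨∅, fun u => (hemp.false u).elim, by simp⟩
  set Rf : ι → RayR := fun v => Rof (P v) with hRfdef
  set Sf : ι → VSeg := fun v => Sof (P v) with hSfdef
  have hx0 : ∀ v, 0 ≤ x v := fun v => (hx01 v).1
  -- splitting
  have hsplit : ∀ u : ι,
      (1/2 : ℝ) ≤ ∑ v ∈ univ.filter (fun v => hitsR (Rf u) (Sf v)), x v ∨
      (1/2 : ℝ) ≤ ∑ v ∈ univ.filter (fun v => hitsR (Rf v) (Sf u)), x v := by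
    intro u
    by_contra hcon
    push_neg at hcon
    obtain ⟨h1, h2⟩ := hcon
    have hsub : univ.filter (fun v => ((P v).pts ∩ (P u).pts).Nonempty) ⊆
        univ.filter (fun v => hitsR (Rf u) (Sf v)) ∪
        univ.filter (fun v => hitsR (Rf v) (Sf u)) := by
      intro v hv
      simp only [mem_filter, mem_union, mem_univ, true_and] at hv ⊢
      exact inter_to_hits hv
    have hle := Finset.sum_le_sum_of_subset_of_nonneg hsub (fun v _ _ => hx0 v)
    have hui : ∑ v ∈ (univ.filter (fun v => hitsR (Rf u) (Sf v)) ∪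
          univ.filter (fun v => hitsR (Rf v) (Sf u))), x v +
        ∑ v ∈ (univ.filter (fun v => hitsR (Rf u) (Sf v)) ∩
          univ.filter (fun v => hitsR (Rf v) (Sf u))), x v =
        ∑ v ∈ univ.filter (fun v => hitsR (Rf u) (Sf v)), x v +
        ∑ v ∈ univ.filter (fun v => hitsR (Rf v) (Sf u)), x v :=
      Finset.sum_union_inter
    have hint : (0:ℝ) ≤ ∑ v ∈ (univ.filter (fun v => hitsR (Rf u) (Sf v)) ∩
        univ.filter (fun v => hitsR (Rf v) (Sf u))), x v := sum_nonneg fun v _ => hx0 v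
    have := hxf u
    linarith
  set U1 : Finset ι := univ.filter
    (fun u => (1/2 : ℝ) ≤ ∑ v ∈ univ.filter (fun v => hitsR (Rf u) (Sf v)), x v) with hU1
  set U2 : Finset ι := univ.filter
    (fun u => (1/2 : ℝ) ≤ ∑ v ∈ univ.filter (fun v => hitsR (Rf v) (Sf u)), x v) with hU2
  -- ==================== Subproblem 1 : rays of U1 covered by all segments (SRS)
  obtain ⟨s1, hs1sub, hs1hit, hs1card⟩ :
      ∃ s1 : Finset VSeg, s1 ⊆ univ.image Sf ∧
        (∀ r ∈ U1.image Rf, ∃ v ∈ s1, hitsR r v) ∧ (s1.card : ℝ) ≤ 4 * ∑ v, x v := by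
    set RR : Finset RayR := U1.image Rf
    set VV : Finset VSeg := univ.image Sf
    have hfeas1 : ∀ r ∈ RR, 1 ≤ ∑ s ∈ VV.filter (fun s => hitsR r s),
        min 1 (2 * ∑ v ∈ univ.filter (fun v => Sf v = s), x v) := by
      intro r hr
      obtain ⟨u, hu, rfl⟩ := mem_image.mp hr
      exact round_half Sf x hx0 (fun s => hitsR (Rf u) s) ((mem_filter.mp hu).2)
    have hLP1 : sInf {c : ℝ | ∃ x' : VSeg → ℝ, (∀ v, 0 ≤ x' v ∧ x' v ≤ 1) ∧
        (∀ r ∈ RR, 1 ≤ ∑ v ∈ VV.filter (fun v => hitsR r v), x' v) ∧ c = ∑ v ∈ VV, x' v}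
        ≤ 2 * ∑ v, x v := by
      have hmem : (∑ s ∈ VV, min 1 (2 * ∑ v ∈ univ.filter (fun v => Sf v = s), x v)) ∈
          {c : ℝ | ∃ x' : VSeg → ℝ, (∀ v, 0 ≤ x' v ∧ x' v ≤ 1) ∧
          (∀ r ∈ RR, 1 ≤ ∑ v ∈ VV.filter (fun v => hitsR r v), x' v) ∧ c = ∑ v ∈ VV, x' v} :=
        ⟨_, fun s => ⟨le_min zero_le_one (by
          have : (0:ℝ) ≤ ∑ v ∈ univ.filter (fun v => Sf v = s), x v :=
            sum_nonneg fun v _ => hx0 v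
          linarith), min_le_left _ _⟩, hfeas1, rfl⟩
      refine le_trans (csInf_le ⟨0, ?_⟩ hmem) ?_
      · rintro c ⟨x', hx', _, rfl⟩
        exact sum_nonneg fun v _ => (hx' v).1
      · have h1 : ∑ s ∈ VV, min 1 (2 * ∑ v ∈ univ.filter (fun v => Sf v = s), x v)
            ≤ ∑ s ∈ VV, 2 * ∑ v ∈ univ.filter (fun v => Sf v = s), x v :=
          sum_le_sum fun s _ => min_le_right _ _
        have h2 : ∑ s ∈ VV, 2 * ∑ v ∈ univ.filter (fun v => Sf v = s), x v
            = 2 * ∑ v, x v := by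
          rw [← Finset.mul_sum]
          congr 1
          simpa using fiber_sum Sf x (fun _ => True)
        linarith
    have hILP1 : sInf {c : ℝ | ∃ s : Finset VSeg, s ⊆ VV ∧ (∀ r ∈ RR, ∃ v ∈ s, hitsR r v) ∧
        c = s.card} ≤ 4 * ∑ v, x v := by
      refine le_trans (hSRS RR VV) ?_
      linarith
    have hne1 : {c : ℝ | ∃ s : Finset VSeg, s ⊆ VV ∧ (∀ r ∈ RR, ∃ v ∈ s, hitsR r v) ∧
        c = s.card}.Nonempty := by
      refine ⟨(VV.card : ℝ), VV, Finset.Subset.refl _, ?_, rfl⟩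
      intro r hr
      obtain ⟨u, hu, rfl⟩ := mem_image.mp hr
      have huU := (mem_filter.mp hu).2
      have hfn : (univ.filter (fun v => hitsR (Rf u) (Sf v))).Nonempty := by
        by_contra hcon
        rw [not_nonempty_iff_eq_empty] at hcon
        rw [hcon, sum_empty] at huU
        linarith
      obtain ⟨v, hv⟩ := hfn
      exact ⟨Sf v, mem_image_of_mem Sf (mem_univ v), (mem_filter.mp hv).2⟩
    have hfin1 : {c : ℝ | ∃ s : Finset VSeg, s ⊆ VV ∧ (∀ r ∈ RR, ∃ v ∈ s, hitsR r v) ∧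
        c = s.card}.Finite := by
      apply Set.Finite.subset (Finset.finite_toSet (VV.powerset.image (fun s => (s.card : ℝ))))
      rintro c ⟨s, hs, _, rfl⟩
      simp only [Finset.coe_image, Set.mem_image, Finset.mem_coe, Finset.mem_powerset]
      exact ⟨s, hs, rfl⟩
    obtain ⟨s1, hsub, hhit, hcard⟩ := hne1.csInf_mem hfin1
    exact ⟨s1, hsub, hhit, le_of_eq_of_le hcard.symm hILP1⟩
  -- ==================== Subproblem 2 : segments of U2 covered by all rays (SSR)
  obtain ⟨s2, hs2sub, hs2hit, hs2card⟩ :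
      ∃ s2 : Finset RayR, s2 ⊆ univ.image Rf ∧
        (∀ sg ∈ U2.image Sf, ∃ r ∈ s2, hitsR r sg) ∧ (s2.card : ℝ) ≤ 4 * ∑ v, x v := by
    set RR : Finset RayR := univ.image Rf
    set VV : Finset VSeg := U2.image Sf
    have hfeas2 : ∀ sg ∈ VV, 1 ≤ ∑ r ∈ RR.filter (fun r => hitsR r sg),
        min 1 (2 * ∑ v ∈ univ.filter (fun v => Rf v = r), x v) := by
      intro sg hsg
      obtain ⟨u, hu, rfl⟩ := mem_image.mp hsg
      exact round_half Rf x hx0 (fun r => hitsR r (Sf u)) ((mem_filter.mp hu).2)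
    have hLP2 : sInf {c : ℝ | ∃ x' : RayR → ℝ, (∀ r, 0 ≤ x' r ∧ x' r ≤ 1) ∧
        (∀ sg ∈ VV, 1 ≤ ∑ r ∈ RR.filter (fun r => hitsR r sg), x' r) ∧ c = ∑ r ∈ RR, x' r}
        ≤ 2 * ∑ v, x v := by
      have hmem : (∑ r ∈ RR, min 1 (2 * ∑ v ∈ univ.filter (fun v => Rf v = r), x v)) ∈
          {c : ℝ | ∃ x' : RayR → ℝ, (∀ r, 0 ≤ x' r ∧ x' r ≤ 1) ∧
          (∀ sg ∈ VV, 1 ≤ ∑ r ∈ RR.filter (fun r => hitsR r sg), x' r) ∧ c = ∑ r ∈ RR, x' r} :=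
        ⟨_, fun r => ⟨le_min zero_le_one (by
          have : (0:ℝ) ≤ ∑ v ∈ univ.filter (fun v => Rf v = r), x v :=
            sum_nonneg fun v _ => hx0 v
          linarith), min_le_left _ _⟩, hfeas2, rfl⟩
      refine le_trans (csInf_le ⟨0, ?_⟩ hmem) ?_
      · rintro c ⟨x', hx', _, rfl⟩
        exact sum_nonneg fun r _ => (hx' r).1
      · have h1 : ∑ r ∈ RR, min 1 (2 * ∑ v ∈ univ.filter (fun v => Rf v = r), x v)
            ≤ ∑ r ∈ RR, 2 * ∑ v ∈ univ.filter (fun v => Rf v = r), x v :=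
          sum_le_sum fun r _ => min_le_right _ _
        have h2 : ∑ r ∈ RR, 2 * ∑ v ∈ univ.filter (fun v => Rf v = r), x v
            = 2 * ∑ v, x v := by
          rw [← Finset.mul_sum]
          congr 1
          simpa using fiber_sum Rf x (fun _ => True)
        linarith
    have hILP2 : sInf {c : ℝ | ∃ s : Finset RayR, s ⊆ RR ∧ (∀ sg ∈ VV, ∃ r ∈ s, hitsR r sg) ∧
        c = s.card} ≤ 4 * ∑ v, x v := by
      refine le_trans (hSSR RR VV) ?_
      linarith
    have hne2 : {c : ℝ | ∃ s : Finset RayR, s ⊆ RR ∧ (∀ sg ∈ VV, ∃ r ∈ s, hitsR r sg) ∧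
        c = s.card}.Nonempty := by
      refine ⟨(RR.card : ℝ), RR, Finset.Subset.refl _, ?_, rfl⟩
      intro sg hsg
      obtain ⟨u, hu, rfl⟩ := mem_image.mp hsg
      have huU := (mem_filter.mp hu).2
      have hfn : (univ.filter (fun v => hitsR (Rf v) (Sf u))).Nonempty := by
        by_contra hcon
        rw [not_nonempty_iff_eq_empty] at hcon
        rw [hcon, sum_empty] at huU
        linarith
      obtain ⟨v, hv⟩ := hfn
      exact ⟨Rf v, mem_image_of_mem Rf (mem_univ v), (mem_filter.mp hv).2⟩
    have hfin2 : {c : ℝ | ∃ s : Finset RayR, s ⊆ RR ∧ (∀ sg ∈ VV, ∃ r ∈ s, hitsR r sg) ∧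
        c = s.card}.Finite := by
      apply Set.Finite.subset (Finset.finite_toSet (RR.powerset.image (fun s => (s.card : ℝ))))
      rintro c ⟨s, hs, _, rfl⟩
      simp only [Finset.coe_image, Set.mem_image, Finset.mem_coe, Finset.mem_powerset]
      exact ⟨s, hs, rfl⟩
    obtain ⟨s2, hsub, hhit, hcard⟩ := hne2.csInf_mem hfin2
    exact ⟨s2, hsub, hhit, le_of_eq_of_le hcard.symm hILP2⟩
  -- ==================== combine
  refine ⟨s1.image (Function.invFun Sf) ∪ s2.image (Function.invFun Rf), ?_, ?_⟩
  · intro u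
    rcases hsplit u with h | h
    · have hu1 : u ∈ U1 := mem_filter.mpr ⟨mem_univ u, h⟩
      obtain ⟨sg, hsg, hhit⟩ := hs1hit (Rf u) (mem_image_of_mem Rf hu1)
      obtain ⟨w, _, hw⟩ := mem_image.mp (hs1sub hsg)
      have hps : Sf (Function.invFun Sf sg) = sg := Function.invFun_eq ⟨w, hw⟩
      refine ⟨Function.invFun Sf sg, mem_union_left _ (mem_image_of_mem _ hsg), ?_⟩
      exact hits_to_inter (by rw [show Sof (P (Function.invFun Sf sg))
        = Sf (Function.invFun Sf sg) from rfl, hps]; exact hhit)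
    · have hu2 : u ∈ U2 := mem_filter.mpr ⟨mem_univ u, h⟩
      obtain ⟨r, hr, hhit⟩ := hs2hit (Sf u) (mem_image_of_mem Sf hu2)
      obtain ⟨w, _, hw⟩ := mem_image.mp (hs2sub hr)
      have hpr : Rf (Function.invFun Rf r) = r := Function.invFun_eq ⟨w, hw⟩
      refine ⟨Function.invFun Rf r, mem_union_right _ (mem_image_of_mem _ hr), ?_⟩
      rw [Set.inter_comm]
      exact hits_to_inter (by rw [show Rof (P (Function.invFun Rf r))
        = Rf (Function.invFun Rf r) from rfl, hpr]; exact hhit)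
  · have hc : (s1.image (Function.invFun Sf) ∪ s2.image (Function.invFun Rf)).card
        ≤ s1.card + s2.card :=
      le_trans (Finset.card_union_le _ _)
        (add_le_add (Finset.card_image_le) (Finset.card_image_le))
    have hc' : ((s1.image (Function.invFun Sf) ∪ s2.image (Function.invFun Rf)).card : ℝ)
        ≤ (s1.card : ℝ) + (s2.card : ℝ) := by exact_mod_cast hc
    linarith

end Aux

open Finset in
/-- assuming the SSR covering ILP (choose a minimum number of rays
hitting all vertical segments) and the SRS ILP (choose a minimum number of vertical
segments hitting all rays) both have optimum at most twice their LP optima, then for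
any vertically-stabbed-L graph given by a representation `P : ι → LPath` (with
`H u` = neighbours meeting the horizontal segment of `L_u` and `V u` the remaining
neighbours), the dominating-set ILP `Q` admits a feasible dominating set `D` with
`|D| ≤ 8·OPT(Q_l) ≤ 8·OPT(Q)`. -/
theorem stabbedL_dominating_set_8_approx
    (hSSR : ∀ (R : Finset RayR) (V : Finset VSeg),
      sInf {c : ℝ | ∃ s : Finset RayR, s ⊆ R ∧ (∀ v ∈ V, ∃ r ∈ s, hitsR r v) ∧
          c = s.card}
        ≤ 2 * sInf {c : ℝ | ∃ x : RayR → ℝ, (∀ r, 0 ≤ x r ∧ x r ≤ 1) ∧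
          (∀ v ∈ V, 1 ≤ ∑ r ∈ R.filter (fun r => hitsR r v), x r) ∧
          c = ∑ r ∈ R, x r})
    (hSRS : ∀ (R : Finset RayR) (V : Finset VSeg),
      sInf {c : ℝ | ∃ s : Finset VSeg, s ⊆ V ∧ (∀ r ∈ R, ∃ v ∈ s, hitsR r v) ∧
          c = s.card}
        ≤ 2 * sInf {c : ℝ | ∃ x : VSeg → ℝ, (∀ v, 0 ≤ x v ∧ x v ≤ 1) ∧
          (∀ r ∈ R, 1 ≤ ∑ v ∈ V.filter (fun v => hitsR r v), x v) ∧
          c = ∑ v ∈ V, x v})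
    {ι : Type*} [Fintype ι] (P : ι → LPath) :
    ∃ D : Finset ι,
      (∀ u : ι, ∃ v ∈ D, ((P v).pts ∩ (P u).pts).Nonempty) ∧
      ((D.card : ℝ) ≤ 8 * sInf {c : ℝ | ∃ x : ι → ℝ, (∀ v, 0 ≤ x v ∧ x v ≤ 1) ∧
          (∀ u : ι, 1 ≤ ∑ v ∈ univ.filter (fun v => ((P v).pts ∩ (P u).pts).Nonempty), x v) ∧
          c = ∑ v, x v}) ∧
      sInf {c : ℝ | ∃ x : ι → ℝ, (∀ v, 0 ≤ x v ∧ x v ≤ 1) ∧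
          (∀ u : ι, 1 ≤ ∑ v ∈ univ.filter (fun v => ((P v).pts ∩ (P u).pts).Nonempty), x v) ∧
          c = ∑ v, x v}
        ≤ sInf {c : ℝ | ∃ D' : Finset ι,
            (∀ u : ι, ∃ v ∈ D', ((P v).pts ∩ (P u).pts).Nonempty) ∧ c = D'.card} := by
  classical
  have hself : ∀ u : ι, ((P u).pts ∩ (P u).pts).Nonempty := fun u => selfInter (P u)
  set S : Set ℝ := {c : ℝ | ∃ x : ι → ℝ, (∀ v, 0 ≤ x v ∧ x v ≤ 1) ∧
      (∀ u : ι, 1 ≤ ∑ v ∈ univ.filter (fun v => ((P v).pts ∩ (P u).pts).Nonempty), x v) ∧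
      c = ∑ v, x v} with hSdef
  have hSbdd : BddBelow S := by
    refine ⟨0, ?_⟩
    rintro c ⟨x, hx, _, rfl⟩
    exact sum_nonneg fun v _ => (hx v).1
  have hSne : S.Nonempty := by
    refine ⟨∑ _v : ι, (1:ℝ), fun _ => 1, fun _ => ⟨zero_le_one, le_rfl⟩, fun u => ?_, rfl⟩
    rw [sum_const, nsmul_eq_mul, mul_one]
    exact Nat.one_le_cast.mpr
      (card_pos.mpr ⟨u, mem_filter.mpr ⟨mem_univ u, hself u⟩⟩)
  obtain ⟨D, hDmem, hDmin⟩ := Finset.exists_min_image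
    ((univ : Finset (Finset ι)).filter
      (fun D => ∀ u : ι, ∃ v ∈ D, ((P v).pts ∩ (P u).pts).Nonempty))
    Finset.card
    ⟨univ, mem_filter.mpr ⟨mem_univ _, fun u => ⟨u, mem_univ u, hself u⟩⟩⟩
  have hDfeas : ∀ u : ι, ∃ v ∈ D, ((P v).pts ∩ (P u).pts).Nonempty := (mem_filter.mp hDmem).2
  refine ⟨D, hDfeas, ?_, ?_⟩
  · -- |D| ≤ 8 * sInf S
    have key : ∀ c ∈ S, (D.card : ℝ) / 8 ≤ c := by
      rintro c ⟨x, hx01, hxf, rfl⟩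
      obtain ⟨D', hD'f, hD'c⟩ := round_lemma hSSR hSRS P x hx01 hxf
      have hle : D.card ≤ D'.card := hDmin D' (mem_filter.mpr ⟨mem_univ _, hD'f⟩)
      have : (D.card : ℝ) ≤ D'.card := by exact_mod_cast hle
      linarith
    have h8 : (D.card : ℝ) / 8 ≤ sInf S := le_csInf hSne key
    linarith
  · -- sInf S ≤ sInf ILP
    refine le_csInf ⟨((univ : Finset ι).card : ℝ), univ,
      fun u => ⟨u, mem_univ u, hself u⟩, rfl⟩ ?_
    rintro c ⟨D', hD', rfl⟩
    refine csInf_le hSbdd ⟨fun v => if v ∈ D' then (1:ℝ) else 0, ?_, ?_, ?_⟩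
    · intro v
      by_cases h : v ∈ D' <;> simp [h]
    · intro u
      obtain ⟨v0, hv0D, hv0i⟩ := hD' u
      have hmem : v0 ∈ univ.filter (fun v => ((P v).pts ∩ (P u).pts).Nonempty) :=
        mem_filter.mpr ⟨mem_univ v0, hv0i⟩
      have hs := Finset.single_le_sum
        (f := fun v => if v ∈ D' then (1:ℝ) else 0)
        (fun v _ => by by_cases h : v ∈ D' <;> simp [h]) hmem
      simpa [hv0D] using hs
    · rw [Finset.sum_ite_mem, Finset.univ_inter, Finset.sum_const, nsmul_eq_mul, mul_one]
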